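/- Let e ≥ 2, r = 3, let B be a base tuple, and let L, M ∈ M̌(3,e) with L ∼ M, wt(L) = 2, and L indecomposable (for every partition of {1,2,3} into nonempty sets S, T there exist s ∈ S, t ∈ T with wt^L(s,t) ≥ 1). Set μ = Pt(B,L) and λ = Pt(B,M). Then μ ≈ λ if and only if μ ⤳ λ and, for the columns i < j and the row index k ∈ {1,2} witnessing μ ⤳ λ (i.e., with L(k,j) = L(k+1,i) = M(k,i) = M(k+1,j) = 1, L(k,i) = L(k+1,j) = M(k,j) = M(k+1,i) = 0, and all other entries of L and M equal), one has #{x : i < x < j and L(k,x) = 1} = #{x : i < x < j and L(k+1,x) = 1}. -/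

import Mathlib

open scoped Classical

namespace AK
noncomputable section



/-! ### Matrices, order from base tuple, abacus β-sets -/

/-- The order ≺ on columns determined by a base tuple `B`. -/
def prec {e : ℕ} (B : Fin e → ℕ) (i j : Fin e) : Prop :=
  B i < B j ∨ (B i = B j ∧ i < j)

/-- `rank B i = π(B)⁻¹(i)`, the number of columns ≺-smaller than `i`. -/
def rank {e : ℕ} (B : Fin e → ℕ) (i : Fin e) : Fin e :=
  ⟨(Finset.univ.filter (fun j => prec B j i)).card, by
    have h1 : (Finset.univ.filter (fun j => prec B j i)) ⊆ Finset.univ.erase i := by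
      intro j hj
      rw [Finset.mem_filter] at hj
      refine Finset.mem_erase.mpr ⟨?_, Finset.mem_univ j⟩
      rintro rfl
      rcases hj.2 with h | ⟨-, h⟩ <;> exact lt_irrefl _ h
    have h2 := Finset.card_le_card h1
    have h3 : (Finset.univ.erase i).card < Finset.univ.card :=
      Finset.card_erase_lt_of_mem (Finset.mem_univ i)
    simpa using lt_of_le_of_lt h2 h3⟩

/-- The number of beads on runner `i` of the abacus of component `s` of `Pt(B,M)`. -/
def beads {e r : ℕ} (B : Fin e → ℕ) (M : Fin r → Fin e → Bool) (s : Fin r) (i : Fin e) : ℕ :=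
  B i + (if M s (rank B i) then 1 else 0)

/-- The canonical β-set of component `s` of `Pt(B,M)`. -/
def Tset {e r : ℕ} (B : Fin e → ℕ) (M : Fin r → Fin e → Bool) (s : Fin r) : Set ℤ :=
  {z | z < 0 ∨ (0 ≤ z ∧ ∃ h : z.toNat % e < e, z.toNat / e < beads B M s ⟨z.toNat % e, h⟩)}

/-- `n_s`, the total number of beads of component `s`. -/
def nsum {e r : ℕ} (B : Fin e → ℕ) (M : Fin r → Fin e → Bool) (s : Fin r) : ℕ :=
  ∑ i : Fin e, beads B M s i

/-- Decreasing enumeration of a set of integers: `tEnum T x` is `t_{x+1}`. -/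
noncomputable def tEnum (T : Set ℤ) : ℕ → ℤ
  | 0 => sSup T
  | (x + 1) => sSup (T ∩ Set.Iio (tEnum T x))

/-- The multipartition `Pt(B,M)`: component `s`, part `p+1` (0-indexed parts). -/
noncomputable def PtPart {e r : ℕ} (B : Fin e → ℕ) (M : Fin r → Fin e → Bool)
    (s : Fin r) (p : ℕ) : ℕ :=
  (tEnum (Tset B M s) p + (p + 1) - (nsum B M s : ℤ)).toNat

/-- The multicharge of `Pt(B,M)`. -/
noncomputable def PtCharge {e r : ℕ} (B : Fin e → ℕ) (M : Fin r → Fin e → Bool)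
    (s : Fin r) : ZMod e :=
  (nsum B M s : ZMod e)

/-! ### Nodes, good nodes and Kleshchev multipartitions -/

/-- A node `(s, x, y)` (all 0-indexed). -/
abbrev Node (r : ℕ) := Fin r × ℕ × ℕ

/-- `A` is above `B`. -/
def NodeAbove {r : ℕ} (A B : Node r) : Prop :=
  A.1 < B.1 ∨ (A.1 = B.1 ∧ A.2.1 < B.2.1)

/-- The residue of a node. -/
def res {e r : ℕ} (a : Fin r → ZMod e) (A : Node r) : ZMod e :=
  a A.1 - (A.2.1 : ZMod e) + (A.2.2 : ZMod e)

/-- `A` is a removable node of `lam`. -/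
def Removable {r : ℕ} (lam : Fin r → ℕ → ℕ) (A : Node r) : Prop :=
  A.2.2 + 1 = lam A.1 A.2.1 ∧ lam A.1 (A.2.1 + 1) < lam A.1 A.2.1

/-- `A` is an addable node of `lam`. -/
def Addable {r : ℕ} (lam : Fin r → ℕ → ℕ) (A : Node r) : Prop :=
  A.2.2 = lam A.1 A.2.1 ∧ (A.2.1 = 0 ∨ lam A.1 A.2.1 < lam A.1 (A.2.1 - 1))

/-- `A` is a normal node of `lam`. -/
def Normal {e r : ℕ} (a : Fin r → ZMod e) (lam : Fin r → ℕ → ℕ) (A : Node r) : Prop :=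
  Removable lam A ∧
    ∀ B : Node r, Addable lam B → res a B = res a A → NodeAbove A B →
      Set.ncard {C : Node r | Addable lam C ∧ res a C = res a A ∧ NodeAbove A C ∧ NodeAbove C B}
        < Set.ncard {C : Node r | Removable lam C ∧ res a C = res a A ∧ NodeAbove A C ∧ NodeAbove C B}

/-- `A` is a good node of `lam`: normal, and highest among normal nodes of its residue. -/
def Good {e r : ℕ} (a : Fin r → ZMod e) (lam : Fin r → ℕ → ℕ) (A : Node r) : Prop :=
  Normal a lam A ∧ ∀ B : Node r, Normal a lam B → res a B = res a A → B ≠ A → NodeAbove A B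

/-- Remove the node `A` from `lam`. -/
def removeNode {r : ℕ} (lam : Fin r → ℕ → ℕ) (A : Node r) : Fin r → ℕ → ℕ :=
  fun s x => if s = A.1 ∧ x = A.2.1 then lam s x - 1 else lam s x

/-- Kleshchev multipartitions (for the multicharge `a`). -/
inductive IsKleshchev {e r : ℕ} (a : Fin r → ZMod e) : (Fin r → ℕ → ℕ) → Prop
  | empty : IsKleshchev a (fun _ _ => 0)
  | step (lam : Fin r → ℕ → ℕ) (A : Node r) (hA : Good a lam A)
      (h : IsKleshchev a (removeNode lam A)) : IsKleshchev a lam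

/-! ### Weights and bead swaps -/

/-- `δ₊^M(t,s)`. -/
def deltaP {e r : ℕ} (M : Fin r → Fin e → Bool) (t s : Fin r) : ℕ :=
  (Finset.univ.filter (fun i => M t i = true ∧ M s i = false)).card

/-- `wt^M(t,s)`. -/
def wtPair {e r : ℕ} (M : Fin r → Fin e → Bool) (t s : Fin r) : ℕ :=
  min (deltaP M t s) (deltaP M s t)

/-- `wt(M)`. -/
def wtM {e r : ℕ} (M : Fin r → Fin e → Bool) : ℕ :=
  ∑ t : Fin r, ∑ s ∈ Finset.univ.filter (· < t), wtPair M t s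

/-- `M'` is obtained from `M` by a bead swap. -/
def BeadSwap {e r : ℕ} (M M' : Fin r → Fin e → Bool) : Prop :=
  ∃ i j : Fin e, i ≠ j ∧ ∃ s t : Fin r, s ≠ t ∧
    M s i = true ∧ M t j = true ∧ M s j = false ∧ M t i = false ∧
    M' s i = false ∧ M' t j = false ∧ M' s j = true ∧ M' t i = true ∧
    (∀ s' i', (s' ≠ s ∧ s' ≠ t) ∨ (i' ≠ i ∧ i' ≠ j) → M' s' i' = M s' i')


/-! ### Moving rim hooks between consecutive components (r = 3) -/

/-- `T'` is obtained from the β-set `T` by removing a rim hook of length `h`,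
using the bead `β`. -/
def HookRemove (T T' : Set ℤ) (h : ℕ) (β : ℤ) : Prop :=
  β ∈ T ∧ (β - (h : ℤ)) ∉ T ∧ T' = (T \ {β}) ∪ {β - (h : ℤ)}

/-- `Pt(B,M)` is obtained from `Pt(B,L)` by removing a rim hook of length `h`
from component `k` (using bead `β`) and adding a rim hook of the same length
to component `k+1` (using bead `β'`). -/
def LeadsToWith {e : ℕ} (B : Fin e → ℕ) (L M : Fin 3 → Fin e → Bool)
    (k : Fin 2) (h : ℕ) (β β' : ℤ) : Prop :=
  1 ≤ h ∧
  HookRemove (Tset B L k.castSucc) (Tset B M k.castSucc) h β ∧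
  HookRemove (Tset B M k.succ) (Tset B L k.succ) h β' ∧
  (∀ s : Fin 3, s ≠ k.castSucc → s ≠ k.succ → Tset B L s = Tset B M s)

/-- `Pt(B,L) ⤳ Pt(B,M)`. -/
def LeadsTo {e : ℕ} (B : Fin e → ℕ) (L M : Fin 3 → Fin e → Bool) : Prop :=
  ∃ k h β β', LeadsToWith B L M k h β β'

/-- `Pt(B,L) ≈ Pt(B,M)`: as `⤳`, with the two rim hooks of equal leg lengths. -/
def RelEq {e : ℕ} (B : Fin e → ℕ) (L M : Fin 3 → Fin e → Bool) : Prop :=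
  ∃ k h β β', LeadsToWith B L M k h β β' ∧
    Set.ncard {w : ℤ | w ∈ Tset B L k.castSucc ∧ β - (h : ℤ) < w ∧ w < β}
      = Set.ncard {w : ℤ | w ∈ Tset B M k.succ ∧ β' - (h : ℤ) < w ∧ w < β'}

section Aux
variable {e : ℕ}

lemma prec_irrefl (B : Fin e → ℕ) (i : Fin e) : ¬ prec B i i := by
  rintro (h | ⟨-, h⟩) <;> exact lt_irrefl _ h

lemma prec_trans {B : Fin e → ℕ} {i j k : Fin e} (h1 : prec B i j) (h2 : prec B j k) :
    prec B i k := by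
  rcases h1 with h1 | ⟨h1, h1'⟩ <;> rcases h2 with h2 | ⟨h2, h2'⟩
  · exact Or.inl (h1.trans h2)
  · exact Or.inl (h2 ▸ h1)
  · exact Or.inl (h1 ▸ h2)
  · exact Or.inr ⟨h1.trans h2, h1'.trans h2'⟩

lemma prec_total {B : Fin e → ℕ} {i j : Fin e} (h : i ≠ j) : prec B i j ∨ prec B j i := by
  rcases lt_trichotomy (B i) (B j) with hb | hb | hb
  · exact Or.inl (Or.inl hb)
  · rcases lt_or_gt_of_ne h with hij | hij
    · exact Or.inl (Or.inr ⟨hb, hij⟩)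
    · exact Or.inr (Or.inr ⟨hb.symm, hij⟩)
  · exact Or.inr (Or.inl hb)

lemma rank_lt_rank {B : Fin e → ℕ} {i j : Fin e} (h : prec B i j) : rank B i < rank B j := by
  have hsub : (Finset.univ.filter (fun w => prec B w i)) ⊂ Finset.univ.filter (fun w => prec B w j) := by
    constructor
    · intro w hw
      rw [Finset.mem_filter] at hw ⊢
      exact ⟨hw.1, prec_trans hw.2 h⟩
    · intro hsub'
      have : i ∈ Finset.univ.filter (fun w => prec B w j) := by
        rw [Finset.mem_filter]; exact ⟨Finset.mem_univ _, h⟩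
      have hi := hsub' this
      rw [Finset.mem_filter] at hi
      exact prec_irrefl B i hi.2
  exact Finset.card_lt_card hsub

lemma rank_lt_rank_iff {B : Fin e → ℕ} {i j : Fin e} : rank B i < rank B j ↔ prec B i j := by
  constructor
  · intro h
    by_cases hij : i = j
    · subst hij; exact absurd h (lt_irrefl _)
    · rcases prec_total hij with hp | hp
      · exact hp
      · exact absurd (rank_lt_rank hp) (by omega)
  · exact rank_lt_rank

lemma rank_injective (B : Fin e → ℕ) : Function.Injective (rank B) := by
  intro i j h
  by_contra hij
  rcases prec_total hij with hp | hp
  · exact absurd (rank_lt_rank hp) (by rw [h]; exact lt_irrefl _)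
  · exact absurd (rank_lt_rank hp) (by rw [h]; exact lt_irrefl _)

lemma rank_bijective (B : Fin e → ℕ) : Function.Bijective (rank B) :=
  Finite.injective_iff_bijective.mp (rank_injective B)

/-- `pib B` is the permutation `π(B)`: inverse of `rank B`. -/
noncomputable def pib (B : Fin e → ℕ) (c : Fin e) : Fin e :=
  (Equiv.ofBijective (rank B) (rank_bijective B)).symm c

lemma rank_pib (B : Fin e → ℕ) (c : Fin e) : rank B (pib B c) = c :=
  (Equiv.ofBijective (rank B) (rank_bijective B)).apply_symm_apply c

lemma pib_rank (B : Fin e → ℕ) (u : Fin e) : pib B (rank B u) = u :=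
  (Equiv.ofBijective (rank B) (rank_bijective B)).symm_apply_apply u

/-- The abacus position of the "extra-bead slot" of column `c`. -/
def zN (B : Fin e → ℕ) (c : Fin e) : ℕ := (pib B c : ℕ) + e * B (pib B c)

lemma zN_lt_zN {B : Fin e → ℕ} {c c' : Fin e} (h : c < c') : zN B c < zN B c' := by
  set u := pib B c with hu
  set v := pib B c' with hv
  have hr : rank B u < rank B v := by rw [hu, hv, rank_pib, rank_pib]; exact h
  have hp : prec B u v := rank_lt_rank_iff.mp hr
  have hue : (u : ℕ) < e := u.isLt
  have hve : (v : ℕ) < e := v.isLt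
  rcases hp with hb | ⟨hb, huv⟩
  · have : e * B u + e ≤ e * B v := by
      have : B u + 1 ≤ B v := hb
      calc e * B u + e = e * (B u + 1) := by ring
        _ ≤ e * B v := Nat.mul_le_mul_left e this
    unfold zN; rw [← hu, ← hv]; omega
  · have huv' : (u : ℕ) < (v : ℕ) := huv
    unfold zN; rw [← hu, ← hv, hb]; omega

lemma zN_lt_iff {B : Fin e → ℕ} {c c' : Fin e} : zN B c < zN B c' ↔ c < c' := by
  constructor
  · intro h
    rcases lt_trichotomy c c' with hc | hc | hc
    · exact hc
    · subst hc; omega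
    · have := zN_lt_zN (B := B) hc; omega
  · exact zN_lt_zN

lemma zN_injective (B : Fin e → ℕ) : Function.Injective (fun c => (zN B c : ℤ)) := by
  intro c c' h
  simp only [Int.ofNat_inj] at h
  rcases lt_trichotomy c c' with hc | hc | hc
  · exact absurd (zN_lt_zN (B := B) hc : zN B _ < zN B _) (by omega)
  · exact hc
  · exact absurd (zN_lt_zN (B := B) hc : zN B _ < zN B _) (by omega)

end Aux

section Aux2
variable {e : ℕ}

lemma neg_mem_Tset {r : ℕ} (B : Fin e → ℕ) (M : Fin r → Fin e → Bool) (s : Fin r) {w : ℤ}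
    (hw : w < 0) : w ∈ Tset B M s := Or.inl hw

lemma repr_unique {u v : Fin e} {m n : ℕ} (h : (u:ℤ) + (e:ℤ)*m = (v:ℤ) + (e:ℤ)*n) :
    u = v ∧ m = n := by
  have hu := u.isLt; have hv := v.isLt
  have h' : (u:ℕ) + e*m = (v:ℕ) + e*n := by exact_mod_cast h
  have hm : ((u:ℕ) + e*m) % e = ((v:ℕ)+e*n) % e := by rw [h']
  rw [Nat.add_mul_mod_self_left, Nat.add_mul_mod_self_left, Nat.mod_eq_of_lt hu,
    Nat.mod_eq_of_lt hv] at hm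
  have he : 0 < e := lt_of_le_of_lt (Nat.zero_le _) hu
  have hmn : m = n := by
    have h2 : e * m = e * n := by omega
    exact Nat.eq_of_mul_eq_mul_left he h2
  exact ⟨Fin.ext hm, hmn⟩

lemma exists_repr (he : 0 < e) {w : ℤ} (hw : 0 ≤ w) :
    ∃ (u : Fin e) (m : ℕ), w = (u:ℤ) + (e:ℤ) * m := by
  refine ⟨⟨w.toNat % e, Nat.mod_lt _ he⟩, w.toNat / e, ?_⟩
  have h1 : w.toNat % e + e * (w.toNat / e) = w.toNat := Nat.mod_add_div _ _
  have h2 : ((w.toNat : ℤ)) = w := Int.toNat_of_nonneg hw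
  rw [← h2]
  exact_mod_cast h1.symm

lemma mem_Tset_iff {r : ℕ} (he : 0 < e) (B : Fin e → ℕ) (M : Fin r → Fin e → Bool) (s : Fin r)
    (u : Fin e) (m : ℕ) :
    ((u : ℤ) + (e:ℤ) * m ∈ Tset B M s) ↔ m < beads B M s u := by
  have hcast : ((u : ℤ) + (e:ℤ) * m) = (((u : ℕ) + e * m : ℕ) : ℤ) := by push_cast; ring
  have htn : ((u : ℤ) + (e:ℤ) * m).toNat = (u : ℕ) + e * m := by
    rw [hcast, Int.toNat_natCast]
  have hmod : ((u : ℕ) + e * m) % e = (u : ℕ) := by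
    rw [Nat.add_mul_mod_self_left, Nat.mod_eq_of_lt u.isLt]
  have hdiv : ((u : ℕ) + e * m) / e = m := by
    rw [Nat.add_mul_div_left _ _ he, Nat.div_eq_of_lt u.isLt, Nat.zero_add]
  have hnn : (0:ℤ) ≤ (u : ℤ) + (e:ℤ) * m := by positivity
  simp only [Tset, Set.mem_setOf_eq, htn, hmod, hdiv, Fin.eta]
  constructor
  · rintro (h | ⟨-, -, h⟩)
    · omega
    · exact h
  · intro h
    exact Or.inr ⟨hnn, u.isLt, h⟩

lemma zN_cast (B : Fin e → ℕ) (c : Fin e) :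
    ((zN B c : ℕ) : ℤ) = ((pib B c : Fin e) : ℤ) + (e:ℤ) * B (pib B c) := by
  unfold zN; push_cast; ring

lemma mem_Tset_zN {r : ℕ} (he : 0 < e) (B : Fin e → ℕ) (M : Fin r → Fin e → Bool) (s : Fin r)
    (c : Fin e) : ((zN B c : ℤ) ∈ Tset B M s) ↔ M s c = true := by
  rw [zN_cast, mem_Tset_iff he]
  unfold beads
  rw [rank_pib]
  cases h : M s c <;> simp

lemma Tset_congr {r r' : ℕ} (B : Fin e → ℕ) (L : Fin r → Fin e → Bool)
    (M : Fin r' → Fin e → Bool) (s : Fin r) (t : Fin r') (h : ∀ c, L s c = M t c) :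
    Tset B L s = Tset B M t := by
  have hb : ∀ u, beads B L s u = beads B M t u := fun u => by unfold beads; rw [h]
  unfold Tset; ext z; simp only [Set.mem_setOf_eq, hb]

lemma row_eq_of_Tset_eq {r r' : ℕ} (he : 0 < e) (B : Fin e → ℕ) (L : Fin r → Fin e → Bool)
    (M : Fin r' → Fin e → Bool) (s : Fin r) (t : Fin r')
    (h : Tset B L s = Tset B M t) (c : Fin e) : L s c = M t c := by
  have h1 := mem_Tset_zN he B L s c
  have h2 := mem_Tset_zN he B M t c
  rw [h] at h1
  cases hL : L s c <;> cases hM : M t c <;> simp_all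

end Aux2


section Aux3
variable {e : ℕ}

lemma pib_injective (B : Fin e → ℕ) : Function.Injective (pib B) :=
  (Equiv.ofBijective (rank B) (rank_bijective B)).symm.injective

lemma beads_true {r : ℕ} {B : Fin e → ℕ} {N : Fin r → Fin e → Bool} {x : Fin r} {w : Fin e}
    (h : N x (rank B w) = true) : beads B N x w = B w + 1 := by simp [beads, h]

lemma beads_false {r : ℕ} {B : Fin e → ℕ} {N : Fin r → Fin e → Bool} {x : Fin r} {w : Fin e}
    (h : N x (rank B w) = false) : beads B N x w = B w := by simp [beads, h]

lemma beads_cases {r : ℕ} (B : Fin e → ℕ) (N : Fin r → Fin e → Bool) (x : Fin r) (w : Fin e) :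
    (N x (rank B w) = true ∧ beads B N x w = B w + 1) ∨
      (N x (rank B w) = false ∧ beads B N x w = B w) := by
  cases hN : N x (rank B w)
  · exact Or.inr ⟨rfl, beads_false hN⟩
  · exact Or.inl ⟨rfl, beads_true hN⟩

lemma zN_rank (B : Fin e → ℕ) (u : Fin e) :
    (zN B (rank B u) : ℤ) = (u : ℤ) + (e:ℤ) * B u := by
  rw [zN_cast, pib_rank]

lemma hookRemove_struct {r : ℕ} (he : 0 < e) (B : Fin e → ℕ) (L M : Fin r → Fin e → Bool)
    (s t : Fin r) (h : ℕ) (β : ℤ) (hh : 1 ≤ h)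
    (H : HookRemove (Tset B L s) (Tset B M t) h β) :
    ∃ i j : Fin e, i < j ∧ L s j = true ∧ M t j = false ∧ L s i = false ∧ M t i = true ∧
      (∀ c, c ≠ i → c ≠ j → L s c = M t c) ∧ β = (zN B j : ℤ) ∧ β - (h : ℤ) = (zN B i : ℤ) := by
  obtain ⟨hβT, hβhT, hT'⟩ := H
  have hβh0 : (0:ℤ) ≤ β - h := by
    by_contra hc; exact hβhT (neg_mem_Tset _ _ _ (by omega))
  have hβ0 : (0:ℤ) ≤ β := by omega
  have hβT' : β ∉ Tset B M t := by
    rw [hT']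
    rintro (⟨-, hmem⟩ | hmem)
    · exact hmem rfl
    · simp only [Set.mem_singleton_iff] at hmem; omega
  have hβhT' : β - (h:ℤ) ∈ Tset B M t := by rw [hT']; exact Or.inr rfl
  obtain ⟨u, m, hum⟩ := exists_repr he hβ0
  obtain ⟨v, n, hvn⟩ := exists_repr he hβh0
  rw [hum, mem_Tset_iff he] at hβT hβT'
  rw [hvn, mem_Tset_iff he] at hβhT hβhT'
  have hbml : beads B M t u ≤ m := not_lt.mp hβT'
  have hbln : beads B L s v ≤ n := not_lt.mp hβhT
  have huv : u ≠ v := by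
    rintro rfl; omega
  -- structure at runner u
  have hKu : L s (rank B u) = true ∧ M t (rank B u) = false ∧ m = B u := by
    rcases beads_cases B L s u with ⟨hLu, hbLu⟩ | ⟨hLu, hbLu⟩ <;>
      rcases beads_cases B M t u with ⟨hMu, hbMu⟩ | ⟨hMu, hbMu⟩ <;>
      first
        | exact ⟨hLu, hMu, by omega⟩
        | omega
  obtain ⟨hLu, hMu, hmBu⟩ := hKu
  -- structure at runner v
  have hKv : M t (rank B v) = true ∧ L s (rank B v) = false ∧ n = B v := by
    rcases beads_cases B L s v with ⟨hLv, hbLv⟩ | ⟨hLv, hbLv⟩ <;>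
      rcases beads_cases B M t v with ⟨hMv, hbMv⟩ | ⟨hMv, hbMv⟩ <;>
      first
        | exact ⟨hMv, hLv, by omega⟩
        | omega
  obtain ⟨hMv, hLv, hnBv⟩ := hKv
  -- the two special columns
  refine ⟨rank B v, rank B u, ?_, hLu, hMu, hLv, hMv, ?_, ?_, ?_⟩
  · -- rank B v < rank B u, via zN
    have h1 : (zN B (rank B v) : ℤ) = β - h := by rw [zN_rank, hvn, hnBv]
    have h2 : (zN B (rank B u) : ℤ) = β := by rw [zN_rank, hum, hmBu]
    have : zN B (rank B v) < zN B (rank B u) := by omega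
    exact zN_lt_iff.mp this
  · -- other columns agree
    intro c hci hcj
    set w := pib B c with hwdef
    have hcw : rank B w = c := rank_pib B c
    have hwu : w ≠ u := by rintro rfl; exact hcj hcw.symm
    have hwv : w ≠ v := by rintro rfl; exact hci hcw.symm
    have hmemT' : ∀ x : ℤ, x ≠ β → x ≠ β - h → (x ∈ Tset B M t ↔ x ∈ Tset B L s) := by
      intro x h1 h2
      rw [hT']
      constructor
      · rintro (⟨hx, -⟩ | hx)
        · exact hx
        · exact absurd hx h2
      · intro hx; exact Or.inl ⟨hx, by simpa using h1⟩
    set x : ℤ := (w:ℤ) + (e:ℤ) * B w with hxdef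
    have hxβ : x ≠ β := by
      rw [hum, hmBu]; intro hEq; exact hwu (repr_unique hEq).1
    have hxβh : x ≠ β - h := by
      rw [hvn, hnBv]; intro hEq; exact hwv (repr_unique hEq).1
    have hx := hmemT' x hxβ hxβh
    rw [hxdef, mem_Tset_iff he, mem_Tset_iff he] at hx
    rcases beads_cases B L s w with ⟨hLw, hbLw⟩ | ⟨hLw, hbLw⟩ <;>
      rcases beads_cases B M t w with ⟨hMw, hbMw⟩ | ⟨hMw, hbMw⟩
    · rw [hcw] at hLw hMw; rw [hLw, hMw]
    · omega
    · omega
    · rw [hcw] at hLw hMw; rw [hLw, hMw]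
  · rw [zN_rank, hum, hmBu]
  · rw [zN_rank, hvn, hnBv]

end Aux3


section Aux4
variable {e : ℕ}

/-- Set equality for a single bead move within one row. -/
lemma Tset_swap {r : ℕ} (he : 0 < e) (B : Fin e → ℕ) (L M : Fin r → Fin e → Bool)
    (s t : Fin r) (i j : Fin e) (hij : i ≠ j)
    (h1 : L s j = true) (h2 : M t j = false) (h3 : L s i = false) (h4 : M t i = true)
    (h5 : ∀ c, c ≠ i → c ≠ j → L s c = M t c) :
    Tset B M t = (Tset B L s \ {(zN B j : ℤ)}) ∪ {(zN B i : ℤ)} := by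
  ext w
  by_cases hw : w < 0
  · simp only [Set.mem_union, Set.mem_diff, Set.mem_singleton_iff]
    have hzj : (0:ℤ) ≤ (zN B j : ℤ) := by positivity
    constructor
    · intro _; exact Or.inl ⟨neg_mem_Tset _ _ _ hw, by omega⟩
    · intro _; exact neg_mem_Tset _ _ _ hw
  · push_neg at hw
    obtain ⟨u, m, rfl⟩ := exists_repr he hw
    have hEqIff : ∀ c' : Fin e, ((u:ℤ) + (e:ℤ)*m = (zN B c' : ℤ)) ↔
        (u = pib B c' ∧ m = B (pib B c')) := by
      intro c'
      rw [zN_cast]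
      constructor
      · intro hEq; exact repr_unique hEq
      · rintro ⟨ha, hb⟩; rw [ha, hb]
    simp only [Set.mem_union, Set.mem_diff, Set.mem_singleton_iff, mem_Tset_iff he, hEqIff]
    have hpibij : pib B i ≠ pib B j := fun hEq => hij (pib_injective B hEq)
    by_cases hui : u = pib B i
    · subst hui
      have hru : rank B (pib B i) = i := rank_pib B i
      have hbM : beads B M t (pib B i) = B (pib B i) + 1 := beads_true (by rw [hru]; exact h4)
      have hbL : beads B L s (pib B i) = B (pib B i) := beads_false (by rw [hru]; exact h3)
      rw [hbM, hbL]
      constructor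
      · intro hm
        by_cases hmB : m = B (pib B i)
        · exact Or.inr ⟨rfl, hmB⟩
        · exact Or.inl ⟨by omega, fun hp => hpibij hp.1⟩
      · rintro (⟨hm, -⟩ | ⟨-, hm⟩) <;> omega
    · by_cases huj : u = pib B j
      · subst huj
        have hru : rank B (pib B j) = j := rank_pib B j
        have hbM : beads B M t (pib B j) = B (pib B j) := beads_false (by rw [hru]; exact h2)
        have hbL : beads B L s (pib B j) = B (pib B j) + 1 := beads_true (by rw [hru]; exact h1)
        rw [hbM, hbL]
        constructor
        · intro hm
          exact Or.inl ⟨by omega, fun hp => absurd hp.2 (by omega)⟩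
        · rintro (⟨hm, hne⟩ | ⟨hEq, -⟩)
          · rcases Nat.lt_or_ge m (B (pib B j)) with hlt | hge
            · exact hlt
            · exact absurd (⟨rfl, by omega⟩ : pib B j = pib B j ∧ m = B (pib B j)) hne
          · exact absurd hEq.symm hpibij
      · have hc : L s (rank B u) = M t (rank B u) := by
          apply h5
          · intro hEq; exact hui (by rw [← pib_rank B u, hEq])
          · intro hEq; exact huj (by rw [← pib_rank B u, hEq])
        have hb : beads B L s u = beads B M t u := by
          unfold beads; rw [hc]
        rw [hb]
        constructor
        · intro hm
          exact Or.inl ⟨hm, fun hp => huj hp.1⟩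
        · rintro (⟨hm, -⟩ | ⟨hEq, -⟩)
          · exact hm
          · exact absurd hEq hui

/-- Description of the difference of two β-sets inside the open interval. -/
lemma Tset_diff_inter {r : ℕ} (he : 0 < e) (B : Fin e → ℕ) (L M : Fin r → Fin e → Bool)
    (s t : Fin r) (i j : Fin e) :
    {w : ℤ | (w ∈ Tset B L s ∧ w ∉ Tset B M t) ∧ (zN B i : ℤ) < w ∧ w < (zN B j : ℤ)}
      = (fun c : Fin e => (zN B c : ℤ)) ''
          {c : Fin e | (i < c ∧ c < j) ∧ L s c = true ∧ M t c = false} := by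
  ext w
  simp only [Set.mem_setOf_eq, Set.mem_image]
  constructor
  · rintro ⟨⟨hwL, hwM⟩, hlo, hhi⟩
    have hw0 : (0:ℤ) ≤ w := le_trans (by positivity) (le_of_lt hlo)
    obtain ⟨u, m, rfl⟩ := exists_repr he hw0
    rw [mem_Tset_iff he] at hwL hwM
    have hwM' : beads B M t u ≤ m := not_lt.mp hwM
    have hK : L s (rank B u) = true ∧ M t (rank B u) = false ∧ m = B u := by
      rcases beads_cases B L s u with ⟨hLu, hbLu⟩ | ⟨hLu, hbLu⟩ <;>
        rcases beads_cases B M t u with ⟨hMu, hbMu⟩ | ⟨hMu, hbMu⟩ <;>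
        first
          | exact ⟨hLu, hMu, by omega⟩
          | omega
    obtain ⟨hLu, hMu, hmBu⟩ := hK
    have hwz : (u:ℤ) + (e:ℤ)*m = (zN B (rank B u) : ℤ) := by rw [zN_rank, hmBu]
    refine ⟨rank B u, ⟨⟨?_, ?_⟩, hLu, hMu⟩, hwz.symm⟩
    · rw [hwz] at hlo
      have hlo2 : zN B i < zN B (rank B u) := by exact_mod_cast hlo
      exact zN_lt_iff.mp hlo2
    · rw [hwz] at hhi
      have hhi2 : zN B (rank B u) < zN B j := by exact_mod_cast hhi
      exact zN_lt_iff.mp hhi2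
  · rintro ⟨c, ⟨⟨hic, hcj⟩, hL, hM⟩, rfl⟩
    refine ⟨⟨(mem_Tset_zN he B L s c).mpr hL, ?_⟩, ?_, ?_⟩
    · intro hmem
      rw [mem_Tset_zN he] at hmem
      rw [hmem] at hM
      simp at hM
    · exact_mod_cast zN_lt_zN hic
    · exact_mod_cast zN_lt_zN hcj

end Aux4


section Aux5
variable {e : ℕ}

lemma sum_three {r : ℕ} {s t : Fin r} (hst : s ≠ t) (f : Fin r → ℕ) :
    ∑ x, f x = f s + (f t + ∑ x ∈ (Finset.univ.erase s).erase t, f x) := by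
  rw [← Finset.add_sum_erase _ f (Finset.mem_univ s),
      ← Finset.add_sum_erase _ f (Finset.mem_erase.mpr ⟨hst.symm, Finset.mem_univ t⟩)]

def colsum {r : ℕ} (M : Fin r → Fin e → Bool) (c : Fin e) : ℕ :=
  ∑ s, (if M s c then 1 else 0)

lemma colsum_beadSwap {r : ℕ} {L M : Fin r → Fin e → Bool} (h : BeadSwap L M) (c : Fin e) :
    colsum L c = colsum M c := by
  obtain ⟨i, j, hij, s, t, hst, h1, h2, h3, h4, h5, h6, h7, h8, hrest⟩ := h
  unfold colsum
  rw [sum_three hst (fun x => if L x c then 1 else 0),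
      sum_three hst (fun x => if M x c then 1 else 0)]
  have hR : ∑ x ∈ (Finset.univ.erase s).erase t, (if L x c then (1:ℕ) else 0)
      = ∑ x ∈ (Finset.univ.erase s).erase t, (if M x c then (1:ℕ) else 0) := by
    refine Finset.sum_congr rfl (fun x hx => ?_)
    rw [Finset.mem_erase, Finset.mem_erase] at hx
    rw [hrest x c (Or.inl ⟨hx.2.1, hx.1⟩)]
  rw [hR]
  by_cases hci : c = i
  · subst hci; rw [h1, h4, h5, h8]; simp
  · by_cases hcj : c = j
    · subst hcj; rw [h2, h3, h6, h7]; simp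
    · rw [hrest s c (Or.inr ⟨hci, hcj⟩), hrest t c (Or.inr ⟨hci, hcj⟩)]

lemma colsum_eqvGen {r : ℕ} {L M : Fin r → Fin e → Bool}
    (h : Relation.EqvGen BeadSwap L M) (c : Fin e) : colsum L c = colsum M c := by
  induction h with
  | rel x y hxy => exact colsum_beadSwap hxy c
  | refl x => rfl
  | symm x y _ ih => exact ih.symm
  | trans x y z _ _ ih1 ih2 => exact ih1.trans ih2

lemma count_iff (he : 0 < e) (B : Fin e → ℕ) (L M : Fin 3 → Fin e → Bool) (k : Fin 2)
    (i j : Fin e)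
    (hmid : ∀ c, c ≠ i → c ≠ j → M k.succ c = L k.succ c) :
    (Set.ncard {w : ℤ | w ∈ Tset B L k.castSucc ∧ (zN B i : ℤ) < w ∧ w < (zN B j : ℤ)}
      = Set.ncard {w : ℤ | w ∈ Tset B M k.succ ∧ (zN B i : ℤ) < w ∧ w < (zN B j : ℤ)})
    ↔ (Finset.univ.filter (fun x : Fin e => i < x ∧ x < j ∧ L k.castSucc x = true)).card
      = (Finset.univ.filter (fun x : Fin e => i < x ∧ x < j ∧ L k.succ x = true)).card := by
  set A := {w : ℤ | w ∈ Tset B L k.castSucc ∧ (zN B i : ℤ) < w ∧ w < (zN B j : ℤ)} with hA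
  set C := {w : ℤ | w ∈ Tset B M k.succ ∧ (zN B i : ℤ) < w ∧ w < (zN B j : ℤ)} with hC
  have hAfin : A.Finite := Set.Finite.subset (Set.finite_Ioo ((zN B i : ℤ)) ((zN B j : ℤ)))
    (fun w hw => Set.mem_Ioo.mpr ⟨hw.2.1, hw.2.2⟩)
  have hCfin : C.Finite := Set.Finite.subset (Set.finite_Ioo ((zN B i : ℤ)) ((zN B j : ℤ)))
    (fun w hw => Set.mem_Ioo.mpr ⟨hw.2.1, hw.2.2⟩)
  rw [Set.ncard_eq_ncard_iff_ncard_diff_eq_ncard_diff hAfin hCfin]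
  have hAC : A \ C = (fun c : Fin e => (zN B c : ℤ)) ''
      {c : Fin e | (i < c ∧ c < j) ∧ L k.castSucc c = true ∧ L k.succ c = false} := by
    have h1 : A \ C = {w : ℤ | (w ∈ Tset B L k.castSucc ∧ w ∉ Tset B M k.succ)
        ∧ (zN B i : ℤ) < w ∧ w < (zN B j : ℤ)} := by
      ext w
      simp only [hA, hC, Set.mem_diff, Set.mem_setOf_eq]
      tauto
    have h2 : {c : Fin e | (i < c ∧ c < j) ∧ L k.castSucc c = true ∧ M k.succ c = false}
        = {c : Fin e | (i < c ∧ c < j) ∧ L k.castSucc c = true ∧ L k.succ c = false} := by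
      ext c
      simp only [Set.mem_setOf_eq]
      constructor
      · rintro ⟨⟨ha, hb⟩, hc, hd⟩
        exact ⟨⟨ha, hb⟩, hc, by rw [← hmid c (ne_of_gt ha) (ne_of_lt hb)]; exact hd⟩
      · rintro ⟨⟨ha, hb⟩, hc, hd⟩
        exact ⟨⟨ha, hb⟩, hc, by rw [hmid c (ne_of_gt ha) (ne_of_lt hb)]; exact hd⟩
    rw [h1, Tset_diff_inter he, h2]
  have hCA : C \ A = (fun c : Fin e => (zN B c : ℤ)) ''
      {c : Fin e | (i < c ∧ c < j) ∧ L k.succ c = true ∧ L k.castSucc c = false} := by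
    have h1 : C \ A = {w : ℤ | (w ∈ Tset B M k.succ ∧ w ∉ Tset B L k.castSucc)
        ∧ (zN B i : ℤ) < w ∧ w < (zN B j : ℤ)} := by
      ext w
      simp only [hA, hC, Set.mem_diff, Set.mem_setOf_eq]
      tauto
    have h2 : {c : Fin e | (i < c ∧ c < j) ∧ M k.succ c = true ∧ L k.castSucc c = false}
        = {c : Fin e | (i < c ∧ c < j) ∧ L k.succ c = true ∧ L k.castSucc c = false} := by
      ext c
      simp only [Set.mem_setOf_eq]
      constructor
      · rintro ⟨⟨ha, hb⟩, hc, hd⟩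
        exact ⟨⟨ha, hb⟩, by rw [← hmid c (ne_of_gt ha) (ne_of_lt hb)]; exact hc, hd⟩
      · rintro ⟨⟨ha, hb⟩, hc, hd⟩
        exact ⟨⟨ha, hb⟩, by rw [hmid c (ne_of_gt ha) (ne_of_lt hb)]; exact hc, hd⟩
    rw [h1, Tset_diff_inter he, h2]
  rw [hAC, hCA, Set.ncard_image_of_injective _ (zN_injective B),
    Set.ncard_image_of_injective _ (zN_injective B)]
  have nconv : ∀ (P Q : Fin e → Prop) [DecidablePred Q], (∀ c, P c ↔ Q c) →
      Set.ncard {c : Fin e | P c} = (Finset.univ.filter Q).card := by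
    intro P Q _ h
    rw [← Set.ncard_coe_finset]
    congr 1
    ext c
    simp [h c]
  rw [nconv _ (fun x : Fin e => (i < x ∧ x < j) ∧ L k.castSucc x = true ∧ L k.succ x = false)
        (fun c => Iff.rfl),
      nconv _ (fun x : Fin e => (i < x ∧ x < j) ∧ L k.succ x = true ∧ L k.castSucc x = false)
        (fun c => Iff.rfl)]
  have hsplit : ∀ (b1 b2 : Fin 3),
      (Finset.univ.filter (fun x : Fin e => i < x ∧ x < j ∧ L b1 x = true)).card
        = (Finset.univ.filter
            (fun x : Fin e => (i < x ∧ x < j) ∧ L b1 x = true ∧ L b2 x = true)).card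
          + (Finset.univ.filter
            (fun x : Fin e => (i < x ∧ x < j) ∧ L b1 x = true ∧ L b2 x = false)).card := by
    intro b1 b2
    rw [← Finset.card_filter_add_card_filter_not
        (p := fun x : Fin e => L b2 x = true)
        (s := Finset.univ.filter (fun x : Fin e => i < x ∧ x < j ∧ L b1 x = true))]
    congr 1
    · rw [Finset.filter_filter]
      apply congrArg Finset.card
      ext x
      simp only [Finset.mem_filter, Finset.mem_univ, true_and]
      tauto
    · rw [Finset.filter_filter]
      apply congrArg Finset.card
      ext x
      simp only [Finset.mem_filter, Finset.mem_univ, true_and, Bool.not_eq_true]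
      tauto
  have hs1 := hsplit k.castSucc k.succ
  have hs2 := hsplit k.succ k.castSucc
  have hcomm : (Finset.univ.filter
        (fun x : Fin e => (i < x ∧ x < j) ∧ L k.castSucc x = true ∧ L k.succ x = true)).card
      = (Finset.univ.filter
        (fun x : Fin e => (i < x ∧ x < j) ∧ L k.succ x = true ∧ L k.castSucc x = true)).card := by
    apply congrArg Finset.card
    ext x
    simp only [Finset.mem_filter, Finset.mem_univ, true_and]
    tauto
  omega

end Aux5

/-- Matrix characterisation of `Pt(B,L) ≈ Pt(B,M)` (equal leg
lengths) in an indecomposable core block of weight 2 with `r = 3`. -/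
theorem relEq_matrix_characterisation (e : ℕ) (he : 2 ≤ e)
    (B : Fin e → ℕ) (hB : ∃ i, B i = 0)
    (L M : Fin 3 → Fin e → Bool)
    (hLcheck : ∀ i : Fin e, ∃ s : Fin 3, L s i = false)
    (hMcheck : ∀ i : Fin e, ∃ s : Fin 3, M s i = false)
    (hequiv : Relation.EqvGen BeadSwap L M)
    (hwt : wtM L = 2)
    (hind : ∀ S T : Finset (Fin 3), S.Nonempty → T.Nonempty → Disjoint S T →
      S ∪ T = Finset.univ → ∃ s ∈ S, ∃ t ∈ T, 1 ≤ wtPair L s t) :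
    RelEq B L M ↔
      ∃ i j : Fin e, i < j ∧ ∃ k : Fin 2,
        L k.castSucc j = true ∧ L k.succ i = true ∧
        M k.castSucc i = true ∧ M k.succ j = true ∧
        L k.castSucc i = false ∧ L k.succ j = false ∧
        M k.castSucc j = false ∧ M k.succ i = false ∧
        (∀ (k' : Fin 3) (i' : Fin e),
          (k' ≠ k.castSucc ∧ k' ≠ k.succ) ∨ (i' ≠ i ∧ i' ≠ j) →
            L k' i' = M k' i') ∧
        (Finset.univ.filter
            (fun x : Fin e => i < x ∧ x < j ∧ L k.castSucc x = true)).card =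
          (Finset.univ.filter
            (fun x : Fin e => i < x ∧ x < j ∧ L k.succ x = true)).card := by
  have he0 : 0 < e := by omega
  constructor
  · -- RelEq → matrix description
    rintro ⟨k, h, β, β', ⟨hh, Hrem1, Hrem2, Hother⟩, hcount⟩
    obtain ⟨i1, j1, hij1, hLj1, hMj1, hLi1, hMi1, hmid1, hβ, hβh⟩ :=
      hookRemove_struct he0 B L M k.castSucc k.castSucc h β hh Hrem1
    obtain ⟨i2, j2, hij2, hMj2, hLj2, hMi2, hLi2, hmid2, hβ2, hβh2⟩ :=
      hookRemove_struct he0 B M L k.succ k.succ h β' hh Hrem2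
    have hks : k.castSucc ≠ k.succ := ne_of_lt (Fin.castSucc_lt_succ : k.castSucc < k.succ)
    have hcs : ∀ c, colsum L c = colsum M c := fun c => colsum_eqvGen hequiv c
    have hstar : ∀ c : Fin e,
        (if L k.castSucc c then 1 else 0) + (if L k.succ c then (1:ℕ) else 0)
          = (if M k.castSucc c then 1 else 0) + (if M k.succ c then 1 else 0) := by
      intro c
      have h1 := hcs c
      unfold colsum at h1
      rw [sum_three hks (fun x => if L x c then 1 else 0),
          sum_three hks (fun x => if M x c then 1 else 0)] at h1
      have h2 : ∑ x ∈ (Finset.univ.erase k.castSucc).erase k.succ,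
            (if L x c then (1:ℕ) else 0)
          = ∑ x ∈ (Finset.univ.erase k.castSucc).erase k.succ,
            (if M x c then (1:ℕ) else 0) := by
        refine Finset.sum_congr rfl (fun x hx => ?_)
        rw [Finset.mem_erase, Finset.mem_erase] at hx
        rw [row_eq_of_Tset_eq he0 B L M x x (Hother x hx.2.1 hx.1) c]
      omega
    have hMj1' : M k.succ j1 = true ∧ L k.succ j1 = false := by
      have hst := hstar j1
      rw [hLj1, hMj1] at hst
      cases hL : L k.succ j1 <;> cases hM : M k.succ j1 <;> rw [hL, hM] at hst <;>
        simp at hst <;> exact ⟨rfl, rfl⟩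
    have hLi1' : L k.succ i1 = true ∧ M k.succ i1 = false := by
      have hst := hstar i1
      rw [hLi1, hMi1] at hst
      cases hL : L k.succ i1 <;> cases hM : M k.succ i1 <;> rw [hL, hM] at hst <;>
        simp at hst <;> exact ⟨rfl, rfl⟩
    have hj12 : j1 = j2 := by
      by_contra hne
      by_cases hji : j1 = i2
      · have hx := hMj1'.1
        rw [hji, hMi2] at hx
        simp at hx
      · have hEq := hmid2 j1 hji hne
        rw [hMj1'.1, hMj1'.2] at hEq
        simp at hEq
    have hi12 : i1 = i2 := by
      by_contra hne
      by_cases hijx : i1 = j2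
      · have hx := hLi1'.1
        rw [hijx, hLj2] at hx
        simp at hx
      · have hEq := hmid2 i1 hne hijx
        rw [hLi1'.2, hLi1'.1] at hEq
        simp at hEq
    subst hj12
    subst hi12
    refine ⟨i1, j1, hij1, k, hLj1, hLi2, hMi1, hMj2, hLi1, hLj2, hMj1, hMi2, ?_, ?_⟩
    · intro k' c hcase
      rcases hcase with ⟨hk1, hk2⟩ | ⟨hc1, hc2⟩
      · exact row_eq_of_Tset_eq he0 B L M k' k' (Hother k' hk1 hk2) c
      · by_cases hk : k' = k.castSucc
        · subst hk; exact hmid1 c hc1 hc2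
        · by_cases hk' : k' = k.succ
          · subst hk'; exact (hmid2 c hc1 hc2).symm
          · exact row_eq_of_Tset_eq he0 B L M k' k' (Hother k' hk hk') c
    · rw [hβh, hβ, hβh2, hβ2] at hcount
      exact (count_iff he0 B L M k i1 j1 (fun c hc1 hc2 => hmid2 c hc1 hc2)).mp hcount
  · -- matrix description → RelEq
    rintro ⟨i, j, hij, k, hLkj, hLsi, hMki, hMsj, hLki, hLsj, hMkj, hMsi, hall, hcnt⟩
    have hzij : zN B i < zN B j := zN_lt_zN hij
    have hcast : (zN B j : ℤ) - ((zN B j - zN B i : ℕ) : ℤ) = (zN B i : ℤ) := by omega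
    refine ⟨k, zN B j - zN B i, (zN B j : ℤ), (zN B j : ℤ),
      ⟨by omega, ⟨(mem_Tset_zN he0 B L k.castSucc j).mpr hLkj, ?_, ?_⟩,
        ⟨(mem_Tset_zN he0 B M k.succ j).mpr hMsj, ?_, ?_⟩, ?_⟩, ?_⟩
    · rw [hcast]
      intro hmem
      rw [mem_Tset_zN he0] at hmem
      rw [hLki] at hmem
      simp at hmem
    · rw [hcast]
      exact Tset_swap he0 B L M k.castSucc k.castSucc i j (ne_of_lt hij) hLkj hMkj hLki hMki
        (fun c hc1 hc2 => hall k.castSucc c (Or.inr ⟨hc1, hc2⟩))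
    · rw [hcast]
      intro hmem
      rw [mem_Tset_zN he0] at hmem
      rw [hMsi] at hmem
      simp at hmem
    · rw [hcast]
      exact Tset_swap he0 B M L k.succ k.succ i j (ne_of_lt hij) hMsj hLsj hMsi hLsi
        (fun c hc1 hc2 => (hall k.succ c (Or.inr ⟨hc1, hc2⟩)).symm)
    · intro s hs1 hs2
      exact Tset_congr B L M s s (fun c => hall s c (Or.inl ⟨hs1, hs2⟩))
    · rw [hcast]
      exact (count_iff he0 B L M k i j
        (fun c hc1 hc2 => (hall k.succ c (Or.inr ⟨hc1, hc2⟩)).symm)).mpr hcnt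



end
end AK
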